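/- Poincaré lemma for 1-forms: every closed smooth 1-form on a star-shaped (hence simply connected) open subset U of ℝⁿ is exact, i.e. if ω = a_i dx^i is smooth on U and satisfies ∂a_j/∂x^i − ∂a_i/∂x^j = 0 for all i, j on U, then there exists a smooth function f : U → ℝ with a_i = ∂f/∂x^i on U, so that ω = df. Thus on such a domain every closed form of degree 1 is a differential. -/

import Mathlib

set_option maxHeartbeats 1000000
set_option synthInstance.maxHeartbeats 400000

open Set Metric intervalIntegral MeasureTheory
open scoped ContDiff

private theorem euclid_coord_le_norm {n : ℕ} (y : EuclideanSpace ℝ (Fin n)) (i : Fin n) :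
    |y i| ≤ ‖y‖ := by
  rw [EuclideanSpace.norm_eq]
  calc |y i| = Real.sqrt (|y i| ^ 2) := by rw [Real.sqrt_sq (abs_nonneg _)]
    _ ≤ _ := by
        apply Real.sqrt_le_sqrt
        exact Finset.single_le_sum (f := fun j => ‖y j‖ ^ 2) (fun j _ => by positivity)
          (Finset.mem_univ i)

private theorem euclid_norm_proj_le {n : ℕ} (i : Fin n) :
    ‖(EuclideanSpace.proj i : EuclideanSpace ℝ (Fin n) →L[ℝ] ℝ)‖ ≤ 1 :=
  ContinuousLinearMap.opNorm_le_bound _ zero_le_one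
    (fun y => by simpa using euclid_coord_le_norm y i)

private theorem euclid_sum_single {n : ℕ} (y : EuclideanSpace ℝ (Fin n)) :
    ∑ i, y i • (EuclideanSpace.single i 1 : EuclideanSpace ℝ (Fin n)) = y := by
  have := (EuclideanSpace.basisFun (Fin n) ℝ).sum_repr y
  simpa [EuclideanSpace.basisFun_apply, EuclideanSpace.basisFun_repr] using this

private theorem clm_eval_eq_sum {n : ℕ} (L : EuclideanSpace ℝ (Fin n) →L[ℝ] ℝ)
    (v : EuclideanSpace ℝ (Fin n)) :
    L v = ∑ i, v i * L (EuclideanSpace.single i 1) := by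
  conv_lhs => rw [← euclid_sum_single v]
  rw [map_sum]
  simp [_root_.map_smul, smul_eq_mul]

private noncomputable def poincareF {n : ℕ} (c : EuclideanSpace ℝ (Fin n))
    (a : Fin n → EuclideanSpace ℝ (Fin n) → ℝ) (x : EuclideanSpace ℝ (Fin n)) (t : ℝ) : ℝ :=
  ∑ i, a i (c + t • (x - c)) * (x - c) i

private noncomputable def poincareF' {n : ℕ} (c : EuclideanSpace ℝ (Fin n))
    (a : Fin n → EuclideanSpace ℝ (Fin n) → ℝ) (x : EuclideanSpace ℝ (Fin n)) (t : ℝ) :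
    EuclideanSpace ℝ (Fin n) →L[ℝ] ℝ :=
  ∑ i, (a i (c + t • (x - c)) • EuclideanSpace.proj i
    + ((x - c) i) • ((fderiv ℝ (a i) (c + t • (x - c))).comp
        (t • ContinuousLinearMap.id ℝ (EuclideanSpace ℝ (Fin n)))))

/-- Poincaré lemma for 1-forms: every closed smooth 1-form `ω = aᵢ dxⁱ` on a star-shaped
open subset `U` of `ℝⁿ` is exact, i.e. if `∂a_j/∂xⁱ − ∂a_i/∂xʲ = 0` on `U` for all `i, j`,
then there is a smooth function `f : U → ℝ` with `aᵢ = ∂f/∂xⁱ` on `U`, so that `ω = df`. -/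
theorem poincare_lemma_one_form (n : ℕ) (U : Set (EuclideanSpace ℝ (Fin n))) (hU : IsOpen U)
    (c : EuclideanSpace ℝ (Fin n)) (hc : c ∈ U) (hstar : StarConvex ℝ c U)
    (a : Fin n → EuclideanSpace ℝ (Fin n) → ℝ)
    (ha : ∀ i, ContDiffOn ℝ (⊤ : ℕ∞) (a i) U)
    (hclosed : ∀ (i j : Fin n), ∀ x ∈ U,
      fderiv ℝ (a j) x (EuclideanSpace.single i 1) -
        fderiv ℝ (a i) x (EuclideanSpace.single j 1) = 0) :
    ∃ f : EuclideanSpace ℝ (Fin n) → ℝ, ContDiffOn ℝ (⊤ : ℕ∞) f U ∧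
      ∀ (i : Fin n), ∀ x ∈ U, fderiv ℝ f x (EuclideanSpace.single i 1) = a i x := by
  classical
  -- the homothety stays in U
  have hpU : ∀ t ∈ Set.Icc (0 : ℝ) 1, ∀ x ∈ U, c + t • (x - c) ∈ U := by
    intro t ht x hx
    have h := hstar hx (sub_nonneg.mpr ht.2) ht.1 (by ring)
    convert h using 1
    module
  -- differentiability of each a i inside U
  have hdiffa : ∀ (i : Fin n), ∀ y ∈ U, HasFDerivAt (a i) (fderiv ℝ (a i) y) y := by
    intro i y hy
    exact (((ha i).contDiffAt (hU.mem_nhds hy)).differentiableAt (by norm_num)).hasFDerivAt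
  have hfc : ∀ i : Fin n, ContinuousOn (fderiv ℝ (a i)) U := fun i =>
    (ha i).continuousOn_fderiv_of_isOpen hU (by norm_num)
  -- continuity of t ↦ c + t • (x - c)
  have hpcont : ∀ x : EuclideanSpace ℝ (Fin n), Continuous fun t : ℝ => c + t • (x - c) := by
    intro x; fun_prop
  have hpmaps : ∀ x ∈ U, Set.MapsTo (fun t : ℝ => c + t • (x - c)) (Set.Icc 0 1) U :=
    fun x hx t ht => hpU t ht x hx
  -- continuity in t of F and F'
  have htFc : ∀ x ∈ U, ContinuousOn (fun t => poincareF c a x t) (Set.Icc (0:ℝ) 1) := by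
    intro x hx
    apply continuousOn_finset_sum
    intro i _
    exact (((ha i).continuousOn.comp ((hpcont x).continuousOn) (hpmaps x hx)).mul
      continuousOn_const)
  have htF'c : ∀ x ∈ U, ContinuousOn (fun t => poincareF' c a x t) (Set.Icc (0:ℝ) 1) := by
    intro x hx
    apply continuousOn_finset_sum
    intro i _
    apply ContinuousOn.add
    · exact (((ha i).continuousOn.comp ((hpcont x).continuousOn) (hpmaps x hx)).smul
        continuousOn_const)
    · exact (continuousOn_const (c := (x - c) i)).smul
        (((hfc i).comp ((hpcont x).continuousOn) (hpmaps x hx)).clm_comp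
          (((continuous_id (X := ℝ)).smul (continuous_const (y := ContinuousLinearMap.id ℝ (EuclideanSpace ℝ (Fin n))))).continuousOn))
  -- differentiability of x ↦ F x t
  have hdiffF : ∀ t ∈ Set.Icc (0:ℝ) 1, ∀ x ∈ U,
      HasFDerivAt (fun y => poincareF c a y t) (poincareF' c a x t) x := by
    intro t ht x hx
    apply HasFDerivAt.fun_sum
    intro i _
    have hp : HasFDerivAt (fun y : EuclideanSpace ℝ (Fin n) => c + t • (y - c))
        (t • ContinuousLinearMap.id ℝ (EuclideanSpace ℝ (Fin n))) x :=
      (((hasFDerivAt_id x).sub_const c).const_smul t).const_add c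
    have h1 : HasFDerivAt (fun y : EuclideanSpace ℝ (Fin n) => a i (c + t • (y - c)))
        ((fderiv ℝ (a i) (c + t • (x - c))).comp (t • ContinuousLinearMap.id ℝ (EuclideanSpace ℝ (Fin n)))) x :=
      (hdiffa i _ (hpU t ht x hx)).comp x hp
    have h2 : HasFDerivAt (fun y : EuclideanSpace ℝ (Fin n) => (y - c) i)
        (EuclideanSpace.proj i : EuclideanSpace ℝ (Fin n) →L[ℝ] ℝ) x := by
      have h := (EuclideanSpace.proj (𝕜 := ℝ) i).hasFDerivAt.comp x
        ((hasFDerivAt_id x).sub_const c)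
      exact h.congr_fderiv (ContinuousLinearMap.comp_id _)
    simpa using h1.fun_mul h2
  -- the main derivative statement
  have hmain : ∀ x₀ ∈ U, HasFDerivAt (fun x => ∫ t in (0:ℝ)..1, poincareF c a x t)
      (∑ i, a i x₀ • (EuclideanSpace.proj i : EuclideanSpace ℝ (Fin n) →L[ℝ] ℝ)) x₀ := by
    intro x₀ hx₀
    obtain ⟨ε, hε, hball⟩ : ∃ ε > 0, Metric.closedBall x₀ ε ⊆ U := by
      obtain ⟨δ, hδ, h⟩ := Metric.isOpen_iff.mp hU x₀ hx₀
      exact ⟨δ / 2, by linarith, (Metric.closedBall_subset_ball (by linarith)).trans h⟩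
    set K : Set (EuclideanSpace ℝ (Fin n)) := (fun q : ℝ × EuclideanSpace ℝ (Fin n) => c + q.1 • (q.2 - c)) ''
      (Set.Icc (0:ℝ) 1 ×ˢ Metric.closedBall x₀ ε) with hK
    have hKcompact : IsCompact K :=
      (isCompact_Icc.prod (isCompact_closedBall x₀ ε)).image (by fun_prop)
    have hKU : K ⊆ U := by
      rintro y ⟨⟨t, x⟩, ⟨ht, hx⟩, rfl⟩
      exact hpU t ht x (hball hx)
    choose Ca hCa using fun i : Fin n =>
      hKcompact.exists_bound_of_continuousOn ((ha i).continuousOn.mono hKU)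
    choose Cd hCd using fun i : Fin n =>
      hKcompact.exists_bound_of_continuousOn ((hfc i).mono hKU)
    set R : ℝ := ‖x₀ - c‖ + ε with hR
    have hR0 : 0 ≤ R := by positivity
    set B : ℝ := ∑ i : Fin n, (|Ca i| + R * |Cd i|) with hB
    have hIoc : Set.uIoc (0:ℝ) 1 ⊆ Set.Icc (0:ℝ) 1 := by
      rw [Set.uIoc_of_le zero_le_one]; exact Set.Ioc_subset_Icc_self
    have hballU : Metric.ball x₀ ε ⊆ U := (Metric.ball_subset_closedBall).trans hball
    have hD : HasFDerivAt (fun x => ∫ t in (0:ℝ)..1, poincareF c a x t)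
        (∫ t in (0:ℝ)..1, poincareF' c a x₀ t) x₀ := by
      apply intervalIntegral.hasFDerivAt_integral_of_dominated_of_fderiv_le
        (F' := fun x t => poincareF' c a x t) (bound := fun _ => B) (s := Metric.ball x₀ ε) (Metric.ball_mem_nhds x₀ hε)
      · filter_upwards [hU.mem_nhds hx₀] with x hx
        exact (((htFc x hx).mono hIoc).aestronglyMeasurable measurableSet_uIoc)
      · apply ContinuousOn.intervalIntegrable
        rw [Set.uIcc_of_le zero_le_one]
        exact htFc x₀ hx₀
      · exact ((htF'c x₀ hx₀).mono hIoc).aestronglyMeasurable measurableSet_uIoc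
      · apply Filter.Eventually.of_forall
        intro t ht x hx
        have ht' : t ∈ Set.Icc (0:ℝ) 1 := hIoc ht
        have hxK : c + t • (x - c) ∈ K :=
          ⟨(t, x), ⟨ht', Metric.ball_subset_closedBall hx⟩, rfl⟩
        have habs : |t| ≤ 1 := abs_le.mpr ⟨by linarith [ht'.1], ht'.2⟩
        have hxcR : ‖x - c‖ ≤ R := by
          calc ‖x - c‖ = ‖(x - x₀) + (x₀ - c)‖ := by abel_nf
            _ ≤ ‖x - x₀‖ + ‖x₀ - c‖ := norm_add_le _ _
            _ ≤ ε + ‖x₀ - c‖ := by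
                have := mem_ball_iff_norm.mp hx
                linarith
            _ = R := by rw [hR]; ring
        calc ‖poincareF' c a x t‖ ≤ ∑ i, ‖a i (c + t • (x - c)) • (EuclideanSpace.proj i : EuclideanSpace ℝ (Fin n) →L[ℝ] ℝ)
              + ((x - c) i) • ((fderiv ℝ (a i) (c + t • (x - c))).comp
                (t • ContinuousLinearMap.id ℝ (EuclideanSpace ℝ (Fin n))))‖ := norm_sum_le _ _
          _ ≤ B := by
              rw [hB]
              apply Finset.sum_le_sum
              intro i _
              apply ContinuousLinearMap.opNorm_le_bound _ (by positivity)
              intro v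
              rw [ContinuousLinearMap.add_apply, ContinuousLinearMap.smul_apply,
                ContinuousLinearMap.smul_apply, ContinuousLinearMap.comp_apply,
                ContinuousLinearMap.smul_apply, ContinuousLinearMap.id_apply]
              have hCa' : |a i (c + t • (x - c))| ≤ |Ca i| :=
                ((hCa i) _ hxK).trans (le_abs_self _)
              have hCd' : |fderiv ℝ (a i) (c + t • (x - c)) (t • v)| ≤ |Cd i| * ‖v‖ := by
                calc |fderiv ℝ (a i) (c + t • (x - c)) (t • v)|
                    ≤ ‖fderiv ℝ (a i) (c + t • (x - c))‖ * ‖t • v‖ := by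
                      rw [← Real.norm_eq_abs]
                      exact ContinuousLinearMap.le_opNorm _ _
                  _ = ‖fderiv ℝ (a i) (c + t • (x - c))‖ * (|t| * ‖v‖) := by
                      rw [norm_smul]; rfl
                  _ ≤ |Cd i| * (1 * ‖v‖) := by
                      apply mul_le_mul (((hCd i) _ hxK).trans (le_abs_self _))
                      · exact mul_le_mul_of_nonneg_right habs (norm_nonneg _)
                      · positivity
                      · exact abs_nonneg _
                  _ = |Cd i| * ‖v‖ := by ring
              have hvi : |v i| ≤ ‖v‖ := euclid_coord_le_norm v i
              have hxi : |(x - c) i| ≤ R := (euclid_coord_le_norm (x - c) i).trans hxcR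
              calc ‖a i (c + t • (x - c)) • v i
                    + (x - c) i • fderiv ℝ (a i) (c + t • (x - c)) (t • v)‖
                  ≤ |a i (c + t • (x - c)) * v i|
                    + |(x - c) i * fderiv ℝ (a i) (c + t • (x - c)) (t • v)| := by
                    rw [smul_eq_mul, smul_eq_mul]
                    exact abs_add_le _ _
                _ ≤ |Ca i| * ‖v‖ + R * (|Cd i| * ‖v‖) := by
                    rw [abs_mul, abs_mul]
                    apply add_le_add
                    · exact mul_le_mul hCa' hvi (abs_nonneg _) (abs_nonneg _)
                    · exact mul_le_mul hxi hCd' (abs_nonneg _) hR0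
                _ = (|Ca i| + R * |Cd i|) * ‖v‖ := by ring
      · exact intervalIntegrable_const
      · apply Filter.Eventually.of_forall
        intro t ht x hx
        exact hdiffF t (hIoc ht) x (hballU hx)
    -- evaluate the derivative on basis vectors
    have hInt' : IntervalIntegrable (poincareF' c a x₀) MeasureTheory.volume 0 1 := by
      apply ContinuousOn.intervalIntegrable
      rw [Set.uIcc_of_le zero_le_one]
      exact htF'c x₀ hx₀
    have hkey : ∀ j : Fin n,
        (∫ t in (0:ℝ)..1, poincareF' c a x₀ t) (EuclideanSpace.single j 1) = a j x₀ := by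
      intro j
      rw [ContinuousLinearMap.intervalIntegral_apply hInt']
      have hder : ∀ t ∈ Set.uIcc (0:ℝ) 1,
          HasDerivAt (fun s => s * a j (c + s • (x₀ - c)))
            (poincareF' c a x₀ t (EuclideanSpace.single j 1)) t := by
        intro t ht
        rw [Set.uIcc_of_le zero_le_one] at ht
        have hy : c + t • (x₀ - c) ∈ U := hpU t ht x₀ hx₀
        have hline : HasDerivAt (fun s : ℝ => c + s • (x₀ - c)) (x₀ - c) t := by
          have := ((hasDerivAt_id t).smul_const (x₀ - c)).const_add c
          simpa using this
        have hg : HasDerivAt (fun s => a j (c + s • (x₀ - c)))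
            ((fderiv ℝ (a j) (c + t • (x₀ - c))) (x₀ - c)) t :=
          (hdiffa j _ hy).comp_hasDerivAt t hline
        have hmul := (hasDerivAt_id t).mul hg
        -- compute F' x₀ t (e_j)
        have e1 : ∀ i : Fin n, fderiv ℝ (a i) (c + t • (x₀ - c)) (EuclideanSpace.single j 1)
            = fderiv ℝ (a j) (c + t • (x₀ - c)) (EuclideanSpace.single i 1) := by
          intro i
          have := hclosed i j _ hy
          linarith
        have e2 : fderiv ℝ (a j) (c + t • (x₀ - c)) (x₀ - c)
            = ∑ i, (x₀ - c) i * fderiv ℝ (a j) (c + t • (x₀ - c)) (EuclideanSpace.single i 1) :=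
          clm_eval_eq_sum _ _
        have hval : poincareF' c a x₀ t (EuclideanSpace.single j 1)
            = a j (c + t • (x₀ - c))
              + t * fderiv ℝ (a j) (c + t • (x₀ - c)) (x₀ - c) := by
          calc poincareF' c a x₀ t (EuclideanSpace.single j 1)
            = ∑ i, (a i (c + t • (x₀ - c)) * (EuclideanSpace.single j 1 : (EuclideanSpace ℝ (Fin n))) i
              + (x₀ - c) i * (t * fderiv ℝ (a i) (c + t • (x₀ - c))
                  (EuclideanSpace.single j 1))) := by
                simp [poincareF', ContinuousLinearMap.sum_apply, smul_eq_mul, _root_.map_smul]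
          _ = a j (c + t • (x₀ - c))
              + t * fderiv ℝ (a j) (c + t • (x₀ - c)) (x₀ - c) := by
              rw [Finset.sum_add_distrib]
              congr 1
              · simp [EuclideanSpace.single_apply]
              · simp_rw [e1]
                rw [e2, Finset.mul_sum]
                exact Finset.sum_congr rfl fun i _ => by ring
        refine hmul.congr_deriv ?_
        rw [hval]
        simp
      rw [intervalIntegral.integral_eq_sub_of_hasDerivAt hder]
      · simp
      · apply ContinuousOn.intervalIntegrable
        rw [Set.uIcc_of_le zero_le_one]
        exact (htF'c x₀ hx₀).clm_apply continuousOn_const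
    have hsum : (∫ t in (0:ℝ)..1, poincareF' c a x₀ t)
        = ∑ i, a i x₀ • (EuclideanSpace.proj i : EuclideanSpace ℝ (Fin n) →L[ℝ] ℝ) := by
      apply ContinuousLinearMap.ext
      intro v
      conv_lhs => rw [← euclid_sum_single v]
      rw [map_sum]
      simp_rw [_root_.map_smul, hkey]
      simp [smul_eq_mul, EuclideanSpace.single_apply, mul_comm]
    rw [hsum] at hD
    exact hD
  refine ⟨fun x => ∫ t in (0:ℝ)..1, poincareF c a x t, ?_, ?_⟩
  · rw [show ((⊤ : ℕ∞) : WithTop ℕ∞) = ∞ from rfl, contDiffOn_infty_iff_fderiv_of_isOpen hU]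
    constructor
    · exact fun x hx => (hmain x hx).differentiableAt.differentiableWithinAt
    · have hL : ContDiffOn ℝ ∞ (fun x => ∑ i, a i x • (EuclideanSpace.proj i : EuclideanSpace ℝ (Fin n) →L[ℝ] ℝ)) U :=
        ContDiffOn.sum fun i _ => (ha i).smul contDiffOn_const
      exact hL.congr fun x hx => (hmain x hx).fderiv
  · intro j x hx
    rw [(hmain x hx).fderiv]
    simp [EuclideanSpace.single_apply, smul_eq_mul]
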